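/- arXiv:2210.01804 — 2 statements merged into one kernel-verified Lean document; each statement's English description precedes it below -/
import Mathlib

section
/- Consider the closed-loop system $x_{k+1} = (A_k + B_k L_k) x_k + ((C_k + D_k L_k) x_k) w_{k+1}$, $x_0 = \xi$, where $L_k = -(R_k + B_k^{\intercal} P_{k+1} B_k + D_k^{\intercal} P_{k+1} D_k)^{-1}(B_k^{\intercal} P_{k+1} A_k + D_k^{\intercal} P_{k+1} C_k)$ and $(P_k)$ solves the Riccati difference equation with $P_N = Q_N$, under $Q_k, Q_N \geq 0$, $R_k > 0$, and $(w_{k+1})$ a martingale difference sequence with conditional variance $1$. Then $\mathbf{E}[x_k^{\intercal} P_k x_k]$ satisfies the identity $\mathbf{E}[x_k^{\intercal} P_k x_k] = \mathbf{E}[x_k^{\intercal} Q_k x_k + (L_k x_k)^{\intercal} R_k (L_k x_k)] + \mathbf{E}[x_{k+1}^{\intercal} P_{k+1} x_{k+1}]$ for each $k = 0, \ldots, N-1$, and consequently $\xi^{\intercal} P_0 \xi = \mathbf{E}[x_N^{\intercal} Q_N x_N] + \sum_{k=0}^{N-1} \mathbf{E}[x_k^{\intercal} Q_k x_k + (L_k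 x_k)^{\intercal} R_k (L_k x_k)]$, i.e., the closed-loop cost equals $\xi^{\intercal} P_0 \xi$. -/
set_option maxHeartbeats 2000000


open Matrix MeasureTheory


lemma real_psd_mul {n m : ℕ} {P : Matrix (Fin n) (Fin n) ℝ} (hP : P.PosSemidef)
    (B : Matrix (Fin n) (Fin m) ℝ) : (Bᵀ * P * B).PosSemidef := by
  have := hP.conjTranspose_mul_mul_same B
  rwa [conjTranspose_eq_transpose_of_trivial] at this

lemma key_identity {n r : ℕ} (A C P' : Matrix (Fin n) (Fin n) ℝ) (B D : Matrix (Fin n) (Fin r) ℝ)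
    (R : Matrix (Fin r) (Fin r) ℝ) (hR : R.PosDef) (hP' : P'.PosSemidef) :
    Aᵀ * P' * A + Cᵀ * P' * C -
      (Aᵀ * P' * B + Cᵀ * P' * D) * (R + Bᵀ * P' * B + Dᵀ * P' * D)⁻¹ *
        (Bᵀ * P' * A + Dᵀ * P' * C)
      = (-((R + Bᵀ * P' * B + Dᵀ * P' * D)⁻¹ * (Bᵀ * P' * A + Dᵀ * P' * C)))ᵀ * R *
          (-((R + Bᵀ * P' * B + Dᵀ * P' * D)⁻¹ * (Bᵀ * P' * A + Dᵀ * P' * C)))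
        + (A + B * -((R + Bᵀ * P' * B + Dᵀ * P' * D)⁻¹ * (Bᵀ * P' * A + Dᵀ * P' * C)))ᵀ * P' *
            (A + B * -((R + Bᵀ * P' * B + Dᵀ * P' * D)⁻¹ * (Bᵀ * P' * A + Dᵀ * P' * C)))
        + (C + D * -((R + Bᵀ * P' * B + Dᵀ * P' * D)⁻¹ * (Bᵀ * P' * A + Dᵀ * P' * C)))ᵀ * P' *
            (C + D * -((R + Bᵀ * P' * B + Dᵀ * P' * D)⁻¹ * (Bᵀ * P' * A + Dᵀ * P' * C))) := by
  have hPT : P'ᵀ = P' := by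
    have := hP'.isHermitian; rwa [IsHermitian, conjTranspose_eq_transpose_of_trivial] at this
  set S : Matrix (Fin r) (Fin r) ℝ := R + Bᵀ * P' * B + Dᵀ * P' * D with hS
  set T : Matrix (Fin r) (Fin n) ℝ := Bᵀ * P' * A + Dᵀ * P' * C with hT
  have hSpd : S.PosDef := by
    have h1 := real_psd_mul hP' B
    have h2 := real_psd_mul hP' D
    exact (hR.add_posSemidef h1).add_posSemidef h2
  have hRT : Rᵀ = R := by
    have := hR.isHermitian; rwa [IsHermitian, conjTranspose_eq_transpose_of_trivial] at this
  have hST : Sᵀ = S := by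
    rw [hS]; simp [transpose_add, transpose_mul, transpose_transpose, hPT, hRT, Matrix.mul_assoc]
  have hTT : Tᵀ = Aᵀ * P' * B + Cᵀ * P' * D := by
    rw [hT]; simp [transpose_add, transpose_mul, transpose_transpose, hPT, Matrix.mul_assoc]
  have hU : IsUnit S.det := (Matrix.isUnit_iff_isUnit_det S).mp hSpd.isUnit
  have hSinv : S⁻¹ * S = 1 := Matrix.nonsing_inv_mul S hU
  have hSiT : (S⁻¹)ᵀ = S⁻¹ := by rw [Matrix.transpose_nonsing_inv, hST]
  set X : Matrix (Fin r) (Fin n) ℝ := S⁻¹ * T with hX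
  have hXT : Xᵀ = Tᵀ * S⁻¹ := by rw [hX, transpose_mul, hSiT]
  have hXSX : Xᵀ * S * X = Tᵀ * S⁻¹ * T := by
    rw [hXT, hX]
    calc Tᵀ * S⁻¹ * S * (S⁻¹ * T) = Tᵀ * S⁻¹ * (S * S⁻¹ * T) := by
          simp only [Matrix.mul_assoc]
      _ = Tᵀ * S⁻¹ * T := by rw [Matrix.mul_nonsing_inv S hU, Matrix.one_mul]
  have expand : (-X)ᵀ * R * (-X) + (A + B * -X)ᵀ * P' * (A + B * -X)
      + (C + D * -X)ᵀ * P' * (C + D * -X)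
      = Xᵀ * (R + Bᵀ * P' * B + Dᵀ * P' * D) * X
        + Aᵀ * P' * A + Cᵀ * P' * C - Tᵀ * X - Xᵀ * T := by
    rw [hTT, hT]
    simp only [transpose_add, transpose_mul, transpose_neg, transpose_transpose,
      Matrix.add_mul, Matrix.mul_add, Matrix.neg_mul, Matrix.mul_neg, neg_neg,
      Matrix.mul_assoc]
    abel
  rw [expand, ← hS, hXSX, hX]
  have hTX : Tᵀ * X = Tᵀ * S⁻¹ * T := by rw [hX, Matrix.mul_assoc]
  rw [← hX, hTX, hXT]
  abel_nf
  rw [hTT]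

section helpers
variable {Ω : Type*} {mΩ : MeasurableSpace Ω} {μ : Measure Ω}

lemma stmt15_mul_int {f g : Ω → ℝ} (hf : MemLp f 2 μ) (hg : MemLp g 2 μ) :
    Integrable (fun ω => f ω * g ω) μ := by
  have h : MemLp (g • f) 1 μ := hf.smul hg
  refine (memLp_one_iff_integrable.mp h).congr (Filter.Eventually.of_forall fun ω => ?_)
  simp [mul_comm]

lemma stmt15_comp {n : ℕ} {f : Ω → Fin n → ℝ} (hf : MemLp f 2 μ) (i : Fin n) :
    MemLp (fun ω => f ω i) 2 μ :=
  (ContinuousLinearMap.proj (R := ℝ) (φ := fun _ : Fin n => ℝ) i).comp_memLp' hf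

lemma stmt15_mulVec_memℒp {n m : ℕ} (M : Matrix (Fin m) (Fin n) ℝ) {f : Ω → Fin n → ℝ}
    (hf : MemLp f 2 μ) : MemLp (fun ω => M.mulVec (f ω)) 2 μ := by
  have := (LinearMap.toContinuousLinearMap (Matrix.mulVecLin M)).comp_memLp' hf
  exact this

lemma stmt15_bilin_int {a b : ℕ} {f : Ω → Fin a → ℝ} {g : Ω → Fin b → ℝ}
    (M : Matrix (Fin a) (Fin b) ℝ) (hf : MemLp f 2 μ) (hg : MemLp g 2 μ) :
    Integrable (fun ω => f ω ⬝ᵥ M.mulVec (g ω)) μ := by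
  have h : (fun ω => f ω ⬝ᵥ M.mulVec (g ω)) = fun ω => ∑ i, ∑ j, f ω i * (M i j * g ω j) := by
    funext ω; simp [dotProduct, mulVec, Finset.mul_sum]
  rw [h]
  exact integrable_finset_sum _ fun i _ => integrable_finset_sum _ fun j _ =>
    stmt15_mul_int (stmt15_comp hf i) ((stmt15_comp hg j).const_mul (M i j))

lemma stmt15_mulVec_meas {n m : ℕ} (M : Matrix (Fin m) (Fin n) ℝ) :
    Measurable (fun v : Fin n → ℝ => M.mulVec v) := by
  refine measurable_pi_lambda _ fun i => ?_
  simp only [mulVec, dotProduct]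
  exact Finset.measurable_sum _ fun j _ => by fun_prop

lemma stmt15_bilin_meas {a b : ℕ} {m : MeasurableSpace Ω} {f : Ω → Fin a → ℝ}
    {g : Ω → Fin b → ℝ} (M : Matrix (Fin a) (Fin b) ℝ)
    (hf : Measurable[m] f) (hg : Measurable[m] g) :
    Measurable[m] (fun ω => f ω ⬝ᵥ M.mulVec (g ω)) := by
  simp only [dotProduct, mulVec]
  exact Finset.measurable_sum _ fun i _ => ((measurable_pi_apply i).comp hf).mul
    (Finset.measurable_sum _ fun j _ => ((measurable_pi_apply j).comp hg).const_mul (M i j))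

lemma stmt15_dot_trans {a b c : ℕ} (u : Fin a → ℝ) (X : Matrix (Fin b) (Fin a) ℝ)
    (Pm : Matrix (Fin b) (Fin c) ℝ) (Y : Matrix (Fin c) (Fin a) ℝ) :
    u ⬝ᵥ (Xᵀ * Pm * Y).mulVec u = X.mulVec u ⬝ᵥ Pm.mulVec (Y.mulVec u) := by
  rw [← Matrix.mulVec_mulVec, ← Matrix.mulVec_mulVec, Matrix.dotProduct_mulVec,
    Matrix.vecMul_transpose]

end helpers

/-- Along the closed-loop system with the optimal feedback gains `L_k`, the
quantity `E[x_kᵀ P_k x_k]` satisfies the per-step identity, and consequently the closed-loop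
cost equals `ξᵀ P₀ ξ`. -/
theorem stmt_15 {Ω : Type*} [m0 : MeasurableSpace Ω] (μ : Measure Ω) [IsProbabilityMeasure μ]
    {n r N : ℕ} (F : ℕ → MeasurableSpace Ω) (hFle : ∀ k, F k ≤ m0)
    (hFmono : ∀ k, F k ≤ F (k + 1))
    (A C Q : ℕ → Matrix (Fin n) (Fin n) ℝ)
    (B D : ℕ → Matrix (Fin n) (Fin r) ℝ) (R : ℕ → Matrix (Fin r) (Fin r) ℝ)
    (hQ : ∀ k, (Q k).PosSemidef) (hQN : (Q N).PosSemidef) (hR : ∀ k, (R k).PosDef)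
    (w : ℕ → Ω → ℝ)
    (hwmeas : ∀ k, Measurable[F (k + 1)] (w (k + 1)))
    (hw0 : ∀ k, μ[w (k + 1) | F k] =ᵐ[μ] 0)
    (hw2 : ∀ k, μ[fun ω => (w (k + 1) ω) ^ 2 | F k] =ᵐ[μ] fun _ => (1 : ℝ))
    (P : ℕ → Matrix (Fin n) (Fin n) ℝ)
    (hPN : P N = Q N)
    (hP : ∀ k < N, P k = Q k + (A k)ᵀ * P (k+1) * A k + (C k)ᵀ * P (k+1) * C k -
      ((A k)ᵀ * P (k+1) * B k + (C k)ᵀ * P (k+1) * D k) *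
        (R k + (B k)ᵀ * P (k+1) * B k + (D k)ᵀ * P (k+1) * D k)⁻¹ *
        ((B k)ᵀ * P (k+1) * A k + (D k)ᵀ * P (k+1) * C k))
    (L : ℕ → Matrix (Fin r) (Fin n) ℝ)
    (hL : ∀ k < N, L k = -((R k + (B k)ᵀ * P (k+1) * B k + (D k)ᵀ * P (k+1) * D k)⁻¹ *
        ((B k)ᵀ * P (k+1) * A k + (D k)ᵀ * P (k+1) * C k)))
    (ξ : Fin n → ℝ)
    (x : ℕ → Ω → Fin n → ℝ)
    (hxmeas : ∀ k, Measurable[F k] (x k)) (hx2 : ∀ k, MemLp (x k) 2 μ)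
    (hx0 : ∀ ω, x 0 ω = ξ)
    (hdyn : ∀ k < N, ∀ᵐ ω ∂μ,
      x (k+1) ω = (A k + B k * L k).mulVec (x k ω)
        + w (k+1) ω • ((C k + D k * L k).mulVec (x k ω))) :
    (∀ k < N,
      ∫ ω, x k ω ⬝ᵥ (P k).mulVec (x k ω) ∂μ
        = (∫ ω, (x k ω ⬝ᵥ (Q k).mulVec (x k ω)
            + (L k).mulVec (x k ω) ⬝ᵥ (R k).mulVec ((L k).mulVec (x k ω))) ∂μ)
          + ∫ ω, x (k+1) ω ⬝ᵥ (P (k+1)).mulVec (x (k+1) ω) ∂μ) ∧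
    ξ ⬝ᵥ (P 0).mulVec ξ
      = (∫ ω, x N ω ⬝ᵥ (Q N).mulVec (x N ω) ∂μ)
        + ∑ k ∈ Finset.range N,
            ∫ ω, (x k ω ⬝ᵥ (Q k).mulVec (x k ω)
              + (L k).mulVec (x k ω) ⬝ᵥ (R k).mulVec ((L k).mulVec (x k ω))) ∂μ := by
  classical
  haveI : (MeasureTheory.ae μ).NeBot := IsProbabilityMeasure.ae_neBot
  have hform : ∀ k, k < N → (P (k+1)).PosSemidef →
      P k = Q k + (L k)ᵀ * R k * L k
        + (A k + B k * L k)ᵀ * P (k+1) * (A k + B k * L k)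
        + (C k + D k * L k)ᵀ * P (k+1) * (C k + D k * L k) := by
    intro k hk hpsd
    have hkey := key_identity (A k) (C k) (P (k+1)) (B k) (D k) (R k) (hR k) hpsd
    rw [hP k hk, hL k hk]
    rw [show ∀ (q a c t : Matrix (Fin n) (Fin n) ℝ), q + a + c - t = q + (a + c - t) from
      fun _ _ _ _ => by abel]
    rw [hkey]
    abel
  have hPSD : ∀ j, j ≤ N → (P j).PosSemidef := by
    suffices h : ∀ d j, j + d = N → (P j).PosSemidef by
      intro j hj; exact h (N - j) j (by omega)
    intro d
    induction d with
    | zero =>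
      intro j hj
      have hjN : j = N := by omega
      subst hjN; rw [hPN]; exact hQN
    | succ d ih =>
      intro j hj
      have hjN : j < N := by omega
      have hpsd : (P (j+1)).PosSemidef := ih (j+1) (by omega)
      rw [hform j hjN hpsd]
      exact (((hQ j).add (real_psd_mul (hR j).posSemidef (L j))).add
        (real_psd_mul hpsd _)).add (real_psd_mul hpsd _)
  have hwm0 : ∀ k, Measurable (w (k+1)) := fun k => (hwmeas k).mono (hFle (k+1)) le_rfl
  have hw2int : ∀ k, Integrable (fun ω => (w (k+1) ω)^2) μ := by
    intro k
    by_contra h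
    have h0 := condExp_of_not_integrable (m := F k) h
    have h1 := hw2 k
    rw [h0] at h1
    have h2 : ∀ᵐ ω ∂μ, (0:ℝ) = 1 := by filter_upwards [h1] with ω h; simpa using h
    obtain ⟨ω, hω⟩ := h2.exists
    norm_num at hω
  have hwL2 : ∀ k, MemLp (w (k+1)) 2 μ := fun k =>
    (memLp_two_iff_integrable_sq (hwm0 k).aestronglyMeasurable).2 (hw2int k)
  have hwint : ∀ k, Integrable (w (k+1)) μ := fun k => (hwL2 k).integrable one_le_two
  have hstep : ∀ k, k < N →
      ∫ ω, x k ω ⬝ᵥ (P k).mulVec (x k ω) ∂μ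
        = (∫ ω, (x k ω ⬝ᵥ (Q k).mulVec (x k ω)
            + (L k).mulVec (x k ω) ⬝ᵥ (R k).mulVec ((L k).mulVec (x k ω))) ∂μ)
          + ∫ ω, x (k+1) ω ⬝ᵥ (P (k+1)).mulVec (x (k+1) ω) ∂μ := by
    intro k hk
    have hP'psd : (P (k+1)).PosSemidef := hPSD (k+1) (by omega)
    set M := A k + B k * L k with hM
    set Nm := C k + D k * L k with hNm
    set P' := P (k+1) with hP'
    set v := x k with hv
    set w' := w (k+1) with hw'
    have hv2 := hx2 k
    have hMv2 : MemLp (fun ω => M.mulVec (v ω)) 2 μ := stmt15_mulVec_memℒp M hv2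
    have hNv2 : MemLp (fun ω => Nm.mulVec (v ω)) 2 μ := stmt15_mulVec_memℒp Nm hv2
    have hLv2 : MemLp (fun ω => (L k).mulVec (v ω)) 2 μ := stmt15_mulVec_memℒp (L k) hv2
    set z := fun ω => x (k+1) ω - M.mulVec (v ω) with hz
    have hz2 : MemLp z 2 μ := (hx2 (k+1)).sub hMv2
    have hzae : ∀ᵐ ω ∂μ, z ω = w' ω • Nm.mulVec (v ω) := by
      filter_upwards [hdyn k hk] with ω h
      rw [hz]
      simp only [h]
      abel
    set g1 := fun ω => M.mulVec (v ω) ⬝ᵥ P'.mulVec (M.mulVec (v ω)) with hg1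
    set g2 := fun ω => M.mulVec (v ω) ⬝ᵥ P'.mulVec (Nm.mulVec (v ω))
      + Nm.mulVec (v ω) ⬝ᵥ P'.mulVec (M.mulVec (v ω)) with hg2
    set g3 := fun ω => Nm.mulVec (v ω) ⬝ᵥ P'.mulVec (Nm.mulVec (v ω)) with hg3
    have hg1int : Integrable g1 μ := stmt15_bilin_int P' hMv2 hMv2
    have hg2int : Integrable g2 μ :=
      (stmt15_bilin_int P' hMv2 hNv2).add (stmt15_bilin_int P' hNv2 hMv2)
    have hg3int : Integrable g3 μ := stmt15_bilin_int P' hNv2 hNv2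
    have hvm : Measurable[F k] v := hxmeas k
    have hMvm : Measurable[F k] (fun ω => M.mulVec (v ω)) := (stmt15_mulVec_meas M).comp hvm
    have hNvm : Measurable[F k] (fun ω => Nm.mulVec (v ω)) := (stmt15_mulVec_meas Nm).comp hvm
    have hg2m : Measurable[F k] g2 :=
      (stmt15_bilin_meas P' hMvm hNvm).add (stmt15_bilin_meas P' hNvm hMvm)
    have hg3m : Measurable[F k] g3 := stmt15_bilin_meas P' hNvm hNvm
    have hexp : ∀ᵐ ω ∂μ, x (k+1) ω ⬝ᵥ P'.mulVec (x (k+1) ω)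
        = g1 ω + g2 ω * w' ω + g3 ω * (w' ω)^2 := by
      filter_upwards [hdyn k hk] with ω h
      rw [h]
      simp only [hg1, hg2, hg3, dotProduct_add, add_dotProduct, mulVec_add, mulVec_smul,
        dotProduct_smul, smul_dotProduct, smul_eq_mul]
      ring
    have hG2 : Integrable (fun ω => g2 ω * w' ω) μ := by
      have hint : Integrable (fun ω => M.mulVec (v ω) ⬝ᵥ P'.mulVec (z ω)
          + z ω ⬝ᵥ P'.mulVec (M.mulVec (v ω))) μ :=
        (stmt15_bilin_int P' hMv2 hz2).add (stmt15_bilin_int P' hz2 hMv2)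
      refine hint.congr ?_
      filter_upwards [hzae] with ω h
      rw [h]
      simp only [hg2, mulVec_smul, dotProduct_smul, smul_dotProduct, smul_eq_mul]
      ring
    have hG3 : Integrable (fun ω => g3 ω * (w' ω)^2) μ := by
      have hint : Integrable (fun ω => z ω ⬝ᵥ P'.mulVec (z ω)) μ := stmt15_bilin_int P' hz2 hz2
      refine hint.congr ?_
      filter_upwards [hzae] with ω h
      rw [h]
      simp only [hg3, mulVec_smul, dotProduct_smul, smul_dotProduct, smul_eq_mul]
      ring
    have hzero : ∫ ω, g2 ω * w' ω ∂μ = 0 := by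
      have hce := condExp_mul_of_stronglyMeasurable_left (μ := μ) (m := F k)
        hg2m.stronglyMeasurable (by exact hG2) (hwint k)
      have hzero' : μ[g2 * w' | F k] =ᵐ[μ] 0 := by
        refine hce.trans ?_
        filter_upwards [hw0 k] with ω h0
        simp [h0]
      calc ∫ ω, g2 ω * w' ω ∂μ = ∫ ω, (μ[g2 * w' | F k]) ω ∂μ :=
            (integral_condExp (hFle k)).symm
        _ = 0 := by rw [integral_congr_ae hzero']; simp
    have hone : ∫ ω, g3 ω * (w' ω)^2 ∂μ = ∫ ω, g3 ω ∂μ := by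
      have hce := condExp_mul_of_stronglyMeasurable_left (μ := μ) (m := F k)
        hg3m.stronglyMeasurable (by exact hG3) (hw2int k)
      have heq : μ[g3 * (fun ω => (w' ω)^2) | F k] =ᵐ[μ] g3 := by
        refine hce.trans ?_
        filter_upwards [hw2 k] with ω h1
        simp only [Pi.mul_apply]
        rw [h1]
        simp
      calc ∫ ω, g3 ω * (w' ω)^2 ∂μ
          = ∫ ω, (μ[g3 * (fun ω => (w' ω)^2) | F k]) ω ∂μ := (integral_condExp (hFle k)).symm
        _ = ∫ ω, g3 ω ∂μ := integral_congr_ae heq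
    have hB : ∫ ω, x (k+1) ω ⬝ᵥ P'.mulVec (x (k+1) ω) ∂μ = ∫ ω, g1 ω ∂μ + ∫ ω, g3 ω ∂μ := by
      rw [integral_congr_ae hexp]
      rw [show (∫ ω, (g1 ω + g2 ω * w' ω + g3 ω * (w' ω)^2) ∂μ)
          = ∫ ω, ((g1 + fun ω => g2 ω * w' ω) + fun ω => g3 ω * (w' ω)^2) ω ∂μ from rfl]
      rw [integral_add' (hg1int.add hG2) hG3, integral_add' hg1int hG2]
      rw [hzero, hone]
      ring
    have hPk := hform k hk hP'psd
    have hsplit : ∀ ω, v ω ⬝ᵥ (P k).mulVec (v ω)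
        = (v ω ⬝ᵥ (Q k).mulVec (v ω)
            + (L k).mulVec (v ω) ⬝ᵥ (R k).mulVec ((L k).mulVec (v ω)))
          + (g1 ω + g3 ω) := by
      intro ω
      rw [hPk]
      simp only [Matrix.add_mulVec, dotProduct_add]
      rw [stmt15_dot_trans, stmt15_dot_trans, stmt15_dot_trans]
      simp only [hg1, hg3]
      ring
    have hcostint : Integrable (fun ω => v ω ⬝ᵥ (Q k).mulVec (v ω)
        + (L k).mulVec (v ω) ⬝ᵥ (R k).mulVec ((L k).mulVec (v ω))) μ :=
      (stmt15_bilin_int (Q k) hv2 hv2).add (stmt15_bilin_int (R k) hLv2 hLv2)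
    calc ∫ ω, v ω ⬝ᵥ (P k).mulVec (v ω) ∂μ
        = ∫ ω, ((v ω ⬝ᵥ (Q k).mulVec (v ω)
            + (L k).mulVec (v ω) ⬝ᵥ (R k).mulVec ((L k).mulVec (v ω)))
          + (g1 ω + g3 ω)) ∂μ := integral_congr_ae (Filter.Eventually.of_forall hsplit)
      _ = (∫ ω, (v ω ⬝ᵥ (Q k).mulVec (v ω)
            + (L k).mulVec (v ω) ⬝ᵥ (R k).mulVec ((L k).mulVec (v ω))) ∂μ)
          + ∫ ω, (g1 ω + g3 ω) ∂μ := integral_add hcostint (hg1int.add hg3int)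
      _ = (∫ ω, (v ω ⬝ᵥ (Q k).mulVec (v ω)
            + (L k).mulVec (v ω) ⬝ᵥ (R k).mulVec ((L k).mulVec (v ω))) ∂μ)
          + ∫ ω, x (k+1) ω ⬝ᵥ P'.mulVec (x (k+1) ω) ∂μ := by
          rw [integral_add hg1int hg3int, hB]
  refine ⟨fun k hk => hstep k hk, ?_⟩
  have htel : ∀ m, m ≤ N → ∫ ω, x 0 ω ⬝ᵥ (P 0).mulVec (x 0 ω) ∂μ
      = (∫ ω, x m ω ⬝ᵥ (P m).mulVec (x m ω) ∂μ)
        + ∑ k ∈ Finset.range m, ∫ ω, (x k ω ⬝ᵥ (Q k).mulVec (x k ω)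
            + (L k).mulVec (x k ω) ⬝ᵥ (R k).mulVec ((L k).mulVec (x k ω))) ∂μ := by
    intro m
    induction m with
    | zero => intro _; simp
    | succ m ih =>
      intro hm
      rw [ih (by omega), hstep m (by omega), Finset.sum_range_succ]
      ring
  have h0 : ∫ ω, x 0 ω ⬝ᵥ (P 0).mulVec (x 0 ω) ∂μ = ξ ⬝ᵥ (P 0).mulVec ξ := by
    simp [hx0]
  rw [← h0, htel N le_rfl, hPN]
end

section
/- (Uniqueness of the optimal control) In the discrete stochastic LQ problem $x_{k+1} = A_k x_k + B_k u_k + (C_k x_k + D_k u_k) w_{k+1}$ with cost $J(u) = \mathbf{E}[x_N^{\intercal} Q_N x_N] + \mathbf{E}\sum_{k=0}^{N-1}(x_k^{\intercal} Q_k x_k + u_k^{\intercal} R_k u_k)$, $Q_k, Q_N \geq 0$, $R_k > 0$, any two optimal controls coincide almost surely: if $J(u) = J(v) = \inf_{\tilde u} J(\tilde u)$, then $u_k = v_k$ a.s. for every $k = 0, \ldots, N-1$. -/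
open Matrix MeasureTheory

private lemma integrable_quad' {Ω : Type*} [MeasurableSpace Ω] {μ : Measure Ω}
    {n r : ℕ} (M : Matrix (Fin n) (Fin r) ℝ)
    {f : Ω → Fin n → ℝ} {g : Ω → Fin r → ℝ}
    (hf : MemLp f 2 μ) (hg : MemLp g 2 μ) :
    Integrable (fun ω => f ω ⬝ᵥ M.mulVec (g ω)) μ := by
  have key : (fun ω => f ω ⬝ᵥ M.mulVec (g ω))
      = fun ω => ∑ i : Fin n, ∑ j : Fin r, M i j * (f ω i * g ω j) := by
    funext ω
    simp only [dotProduct, Matrix.mulVec, Finset.mul_sum]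
    exact Finset.sum_congr rfl fun i _ => Finset.sum_congr rfl fun j _ => by ring
  rw [key]
  refine integrable_finset_sum _ fun i _ => integrable_finset_sum _ fun j _ => ?_
  have hfi : MemLp (fun ω => f ω i) 2 μ :=
    (ContinuousLinearMap.proj (R := ℝ) (φ := fun _ : Fin n => ℝ) i).comp_memLp' hf
  have hgj : MemLp (fun ω => g ω j) 2 μ :=
    (ContinuousLinearMap.proj (R := ℝ) (φ := fun _ : Fin r => ℝ) j).comp_memLp' hg
  have : Integrable (fun ω => f ω i * g ω j) μ := by
    have h := hgj.smul (r := 1) hfi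
      (hpqr := ⟨by simp only [inv_one]; rw [ENNReal.inv_two_add_inv_two]⟩)
    exact memLp_one_iff_integrable.mp h
  exact this.const_mul _

private lemma quad_para' {n : ℕ} (M : Matrix (Fin n) (Fin n) ℝ) (a b : Fin n → ℝ) :
    a ⬝ᵥ M.mulVec a + b ⬝ᵥ M.mulVec b
      - 2 * (((1/2 : ℝ) • (a + b)) ⬝ᵥ M.mulVec ((1/2 : ℝ) • (a + b)))
      = (1/2) * ((a - b) ⬝ᵥ M.mulVec (a - b)) := by
  simp only [Matrix.mulVec_add, Matrix.mulVec_smul, Matrix.mulVec_sub,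
    dotProduct_add, add_dotProduct, dotProduct_sub, sub_dotProduct,
    dotProduct_smul, smul_dotProduct, smul_eq_mul, smul_add]
  ring

private lemma integral_para' {Ω : Type*} [MeasurableSpace Ω] {μ : Measure Ω}
    {n : ℕ} (M : Matrix (Fin n) (Fin n) ℝ) {f g : Ω → Fin n → ℝ}
    (hf : MemLp f 2 μ) (hg : MemLp g 2 μ) :
    (∫ ω, f ω ⬝ᵥ M.mulVec (f ω) ∂μ) + (∫ ω, g ω ⬝ᵥ M.mulVec (g ω) ∂μ)
      - 2 * (∫ ω, ((1/2 : ℝ) • (f ω + g ω)) ⬝ᵥ M.mulVec ((1/2 : ℝ) • (f ω + g ω)) ∂μ)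
    = (1/2) * ∫ ω, (f ω - g ω) ⬝ᵥ M.mulVec (f ω - g ω) ∂μ := by
  have hmid : MemLp (fun ω => (1/2 : ℝ) • (f ω + g ω)) 2 μ := by simpa [Pi.smul_def, Pi.add_def] using (hf.add hg).const_smul ((1:ℝ)/2)
  have If := integrable_quad' M hf hf
  have Ig := integrable_quad' M hg hg
  have Ih := integrable_quad' M hmid hmid
  symm
  rw [← integral_const_mul]
  rw [show (fun ω => (1/2 : ℝ) * ((f ω - g ω) ⬝ᵥ M.mulVec (f ω - g ω)))
      = fun ω => (f ω ⬝ᵥ M.mulVec (f ω) + g ω ⬝ᵥ M.mulVec (g ω))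
        - 2 * (((1/2 : ℝ) • (f ω + g ω)) ⬝ᵥ M.mulVec ((1/2 : ℝ) • (f ω + g ω))) from
    funext fun ω => (quad_para' M (f ω) (g ω)).symm]
  have hIadd : Integrable (fun ω => f ω ⬝ᵥ M.mulVec (f ω) + g ω ⬝ᵥ M.mulVec (g ω)) μ :=
    If.add Ig
  rw [integral_sub hIadd (Ih.const_mul 2), integral_add If Ig, integral_const_mul]

private lemma psd_nonneg' {n : ℕ} {M : Matrix (Fin n) (Fin n) ℝ} (h : M.PosSemidef)
    (x : Fin n → ℝ) : 0 ≤ x ⬝ᵥ M.mulVec x := by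
  have := h.dotProduct_mulVec_nonneg x; rwa [star_trivial] at this

private lemma pd_pos' {n : ℕ} {M : Matrix (Fin n) (Fin n) ℝ} (h : M.PosDef)
    {x : Fin n → ℝ} (hx : x ≠ 0) : 0 < x ⬝ᵥ M.mulVec x := by
  have := h.dotProduct_mulVec_pos hx; rwa [star_trivial] at this

private lemma sum_combine' {N : ℕ} (XN YN ZN TN : ℝ) (ax au bx bu cx cu SQ SR : ℕ → ℝ)
    (hN : XN + YN - 2 * ZN = (1/2) * TN)
    (hQ : ∀ k, ax k + bx k - 2 * cx k = (1/2) * SQ k)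
    (hR : ∀ k, au k + bu k - 2 * cu k = (1/2) * SR k) :
    (XN + ∑ k ∈ Finset.range N, (ax k + au k))
      + (YN + ∑ k ∈ Finset.range N, (bx k + bu k))
      - 2 * (ZN + ∑ k ∈ Finset.range N, (cx k + cu k))
    = (1/2) * TN + ∑ k ∈ Finset.range N, ((1/2) * SQ k + (1/2) * SR k) := by
  rw [← hN]
  rw [Finset.sum_congr rfl (fun k _ =>
    show (1/2) * SQ k + (1/2) * SR k = (ax k + au k) + (bx k + bu k) - 2 * (cx k + cu k) by
      rw [← hQ k, ← hR k]; ring)]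
  simp only [Finset.sum_sub_distrib, Finset.sum_add_distrib, ← Finset.mul_sum]
  ring

/-- Uniqueness of the optimal control in the discrete stochastic LQ problem:
any two optimal admissible controls coincide almost surely at every step. -/
theorem stmt_16 {Ω : Type*} [m0 : MeasurableSpace Ω] (μ : Measure Ω) [IsProbabilityMeasure μ]
    {n r N : ℕ} (F : ℕ → MeasurableSpace Ω) (hFle : ∀ k, F k ≤ m0)
    (hFmono : ∀ k, F k ≤ F (k + 1))
    (A C Q : ℕ → Matrix (Fin n) (Fin n) ℝ)
    (B D : ℕ → Matrix (Fin n) (Fin r) ℝ) (R : ℕ → Matrix (Fin r) (Fin r) ℝ)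
    (hQ : ∀ k, (Q k).PosSemidef) (hQN : (Q N).PosSemidef) (hR : ∀ k, (R k).PosDef)
    (w : ℕ → Ω → ℝ)
    (hwmeas : ∀ k, Measurable[F (k + 1)] (w (k + 1)))
    (hw0 : ∀ k, μ[w (k + 1) | F k] =ᵐ[μ] 0)
    (hw2 : ∀ k, μ[fun ω => (w (k + 1) ω) ^ 2 | F k] =ᵐ[μ] fun _ => (1 : ℝ))
    (ξ : Fin n → ℝ)
    -- admissibility predicate for control/state pairs
    (Adm : (ℕ → Ω → Fin r → ℝ) → (ℕ → Ω → Fin n → ℝ) → Prop)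
    (hAdm : ∀ u x, Adm u x ↔
      ((∀ k, Measurable[F k] (u k)) ∧ (∀ k, MemLp (u k) 2 μ) ∧
       (∀ k, Measurable[F k] (x k)) ∧ (∀ k, MemLp (x k) 2 μ) ∧
       (∀ ω, x 0 ω = ξ) ∧
       (∀ k < N, ∀ᵐ ω ∂μ,
          x (k+1) ω = (A k).mulVec (x k ω) + (B k).mulVec (u k ω)
            + w (k+1) ω • ((C k).mulVec (x k ω) + (D k).mulVec (u k ω)))))
    -- cost functional
    (J : (ℕ → Ω → Fin r → ℝ) → (ℕ → Ω → Fin n → ℝ) → ℝ)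
    (hJ : ∀ u x, J u x = (∫ ω, x N ω ⬝ᵥ (Q N).mulVec (x N ω) ∂μ)
        + ∑ k ∈ Finset.range N,
            ∫ ω, (x k ω ⬝ᵥ (Q k).mulVec (x k ω) + u k ω ⬝ᵥ (R k).mulVec (u k ω)) ∂μ)
    (u : ℕ → Ω → Fin r → ℝ) (x : ℕ → Ω → Fin n → ℝ)
    (v : ℕ → Ω → Fin r → ℝ) (y : ℕ → Ω → Fin n → ℝ)
    (hu : Adm u x) (hv : Adm v y)
    (huopt : ∀ u' x', Adm u' x' → J u x ≤ J u' x')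
    (hvopt : ∀ u' x', Adm u' x' → J v y ≤ J u' x') :
    ∀ k < N, u k =ᵐ[μ] v k := by

  -- unpack admissibility
  obtain ⟨humeas, huL2, hxmeas, hxL2, hx0, hxdyn⟩ := (hAdm u x).mp hu
  obtain ⟨hvmeas, hvL2, hymeas, hyL2, hy0, hydyn⟩ := (hAdm v y).mp hv
  -- midpoint control and state
  set m : ℕ → Ω → Fin r → ℝ := fun k ω => (1/2 : ℝ) • (u k ω + v k ω) with hmdef
  set z : ℕ → Ω → Fin n → ℝ := fun k ω => (1/2 : ℝ) • (x k ω + y k ω) with hzdef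
  have hmL2 : ∀ k, MemLp (m k) 2 μ := fun k => by
    simpa [hmdef, Pi.smul_def, Pi.add_def] using ((huL2 k).add (hvL2 k)).const_smul ((1:ℝ)/2)
  have hzL2 : ∀ k, MemLp (z k) 2 μ := fun k => by
    simpa [hzdef, Pi.smul_def, Pi.add_def] using ((hxL2 k).add (hyL2 k)).const_smul ((1:ℝ)/2)
  have hAdmM : Adm m z := by
    rw [hAdm]
    refine ⟨fun k => ?_, hmL2, fun k => ?_, hzL2, fun ω => ?_, fun k hk => ?_⟩
    · exact ((humeas k).add (hvmeas k)).const_smul ((1:ℝ)/2)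
    · exact ((hxmeas k).add (hymeas k)).const_smul ((1:ℝ)/2)
    · show (1/2 : ℝ) • (x 0 ω + y 0 ω) = ξ
      rw [hx0, hy0]
      funext i
      simp only [Pi.smul_apply, Pi.add_apply, smul_eq_mul]
      ring
    · filter_upwards [hxdyn k hk, hydyn k hk] with ω h1 h2
      show (1/2 : ℝ) • (x (k+1) ω + y (k+1) ω) = _
      rw [h1, h2]
      funext i
      simp only [hzdef, hmdef, Matrix.mulVec_add, Matrix.mulVec_smul, Pi.add_apply,
        Pi.smul_apply, smul_eq_mul]
      ring
  -- the two optimal values agree and are both ≤ the midpoint value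
  have hJuv : J u x = J v y := le_antisymm (huopt v y hv) (hvopt u x hu)
  have hJm : J u x ≤ J m z := huopt m z hAdmM
  -- splitting per-step integrals
  have hInt : ∀ (k : ℕ) (p : Ω → Fin n → ℝ) (q : Ω → Fin r → ℝ),
      MemLp p 2 μ → MemLp q 2 μ →
      ∫ ω, (p ω ⬝ᵥ (Q k).mulVec (p ω) + q ω ⬝ᵥ (R k).mulVec (q ω)) ∂μ
        = (∫ ω, p ω ⬝ᵥ (Q k).mulVec (p ω) ∂μ) + ∫ ω, q ω ⬝ᵥ (R k).mulVec (q ω) ∂μ :=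
    fun k p q hp hq => integral_add (integrable_quad' _ hp hp) (integrable_quad' _ hq hq)
  -- the key parallelogram identity for the costs
  have hkey : J u x + J v y - 2 * J m z
      = (1/2) * (∫ ω, (x N ω - y N ω) ⬝ᵥ (Q N).mulVec (x N ω - y N ω) ∂μ)
        + ∑ k ∈ Finset.range N,
            ((1/2) * (∫ ω, (x k ω - y k ω) ⬝ᵥ (Q k).mulVec (x k ω - y k ω) ∂μ)
             + (1/2) * (∫ ω, (u k ω - v k ω) ⬝ᵥ (R k).mulVec (u k ω - v k ω) ∂μ)) := by
    rw [hJ u x, hJ v y, hJ m z]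
    simp only [hzdef, hmdef]
    rw [Finset.sum_congr rfl (fun k _ => hInt k (x k) (u k) (hxL2 k) (huL2 k)),
        Finset.sum_congr rfl (fun k _ => hInt k (y k) (v k) (hyL2 k) (hvL2 k)),
        Finset.sum_congr rfl (fun k _ =>
          hInt k (fun ω => (1/2 : ℝ) • (x k ω + y k ω))
            (fun ω => (1/2 : ℝ) • (u k ω + v k ω)) (hzL2 k) (hmL2 k))]
    exact sum_combine' _ _ _ _ _ _ _ _ _ _ _ _
      (integral_para' (Q N) (hxL2 N) (hyL2 N))
      (fun k => integral_para' (Q k) (hxL2 k) (hyL2 k))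
      (fun k => integral_para' (R k) (huL2 k) (hvL2 k))
  -- nonnegativity of all the squared-difference integrals
  have hTN : 0 ≤ ∫ ω, (x N ω - y N ω) ⬝ᵥ (Q N).mulVec (x N ω - y N ω) ∂μ :=
    integral_nonneg fun ω => psd_nonneg' hQN _
  have hSQ : ∀ k, 0 ≤ ∫ ω, (x k ω - y k ω) ⬝ᵥ (Q k).mulVec (x k ω - y k ω) ∂μ :=
    fun k => integral_nonneg fun ω => psd_nonneg' (hQ k) _
  have hSR : ∀ k, 0 ≤ ∫ ω, (u k ω - v k ω) ⬝ᵥ (R k).mulVec (u k ω - v k ω) ∂μ :=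
    fun k => integral_nonneg fun ω => psd_nonneg' (hR k).posSemidef _
  -- the whole RHS is ≤ 0, hence each summand vanishes
  have hle0 : (1/2) * (∫ ω, (x N ω - y N ω) ⬝ᵥ (Q N).mulVec (x N ω - y N ω) ∂μ)
        + ∑ k ∈ Finset.range N,
            ((1/2) * (∫ ω, (x k ω - y k ω) ⬝ᵥ (Q k).mulVec (x k ω - y k ω) ∂μ)
             + (1/2) * (∫ ω, (u k ω - v k ω) ⬝ᵥ (R k).mulVec (u k ω - v k ω) ∂μ)) ≤ 0 := by
    rw [← hkey]; linarith
  have hterm_nonneg : ∀ k ∈ Finset.range N,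
      0 ≤ (1/2) * (∫ ω, (x k ω - y k ω) ⬝ᵥ (Q k).mulVec (x k ω - y k ω) ∂μ)
          + (1/2) * (∫ ω, (u k ω - v k ω) ⬝ᵥ (R k).mulVec (u k ω - v k ω) ∂μ) :=
    fun k _ => by linarith [hSQ k, hSR k]
  have hsum_nonneg : 0 ≤ ∑ k ∈ Finset.range N,
      ((1/2) * (∫ ω, (x k ω - y k ω) ⬝ᵥ (Q k).mulVec (x k ω - y k ω) ∂μ)
       + (1/2) * (∫ ω, (u k ω - v k ω) ⬝ᵥ (R k).mulVec (u k ω - v k ω) ∂μ)) :=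
    Finset.sum_nonneg hterm_nonneg
  have hsum0 : ∑ k ∈ Finset.range N,
      ((1/2) * (∫ ω, (x k ω - y k ω) ⬝ᵥ (Q k).mulVec (x k ω - y k ω) ∂μ)
       + (1/2) * (∫ ω, (u k ω - v k ω) ⬝ᵥ (R k).mulVec (u k ω - v k ω) ∂μ)) = 0 :=
    le_antisymm (by linarith) hsum_nonneg
  intro k hk
  have hk' : k ∈ Finset.range N := Finset.mem_range.mpr hk
  have hterm0 := (Finset.sum_eq_zero_iff_of_nonneg hterm_nonneg).mp hsum0 k hk'
  have hSR0 : ∫ ω, (u k ω - v k ω) ⬝ᵥ (R k).mulVec (u k ω - v k ω) ∂μ = 0 := by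
    have := hSQ k; have := hSR k; linarith
  have hIR : Integrable (fun ω => (u k ω - v k ω) ⬝ᵥ (R k).mulVec (u k ω - v k ω)) μ :=
    integrable_quad' _ ((huL2 k).sub (hvL2 k)) ((huL2 k).sub (hvL2 k))
  have hae : (fun ω => (u k ω - v k ω) ⬝ᵥ (R k).mulVec (u k ω - v k ω)) =ᵐ[μ] 0 :=
    (integral_eq_zero_iff_of_nonneg
      (fun ω => psd_nonneg' (hR k).posSemidef _) hIR).mp hSR0
  filter_upwards [hae] with ω hω
  by_contra hne
  have hvne : u k ω - v k ω ≠ 0 := sub_ne_zero.mpr hne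
  have hpos := pd_pos' (hR k) hvne
  rw [show (0 : Ω → ℝ) ω = (0:ℝ) from rfl] at hω
  rw [hω] at hpos
  exact lt_irrefl _ hpos
end
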